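/- The twisted G-action acts by algebra automorphisms of the multiplication m: for any g, h, k ∈ G and any c′, c″ ∈ 𝒞, one has the identity in 𝒞: m_{ghg⁻¹, gkg⁻¹}(T_h(g)(c′) ⊗ T_k(g)(c″)) = T_{hk}(g)(m_{h,k}(c′ ⊗ c″)). -/
import Mathlib


open scoped TensorProduct

noncomputable section

variable {K : Type*} [Field K] {G : Type*} [Group G]
  {A : Type*} [Ring A] [Algebra K A] {ι : Type*} [Fintype ι]

/-- The subspace `𝒞_h = span{c₁c₂ − c₂·h(c₁) | c₁, c₂ ∈ 𝒞}`. -/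
def commSub (ρ : G → A ≃ₐ[K] A) (h : G) : Submodule K A :=
  Submodule.span K {x | ∃ c₁ c₂ : A, x = c₁ * c₂ - c₂ * ρ h c₁}

/-- The map `T_h(g)(c) = c_e⁻¹ c_{g,g⁻¹}⁻¹ g(c) c_{g,h} c_{gh,g⁻¹}`. -/
def Tmap (ρ : G → A ≃ₐ[K] A) (u : G → G → Aˣ) (ue : Aˣ) (g h : G) (x : A) : A :=
  (↑(ue⁻¹) : A) * (↑((u g g⁻¹)⁻¹) : A) * ρ g x * (↑(u g h) : A) * (↑(u (g * h) g⁻¹) : A)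

/-- The twisted multiplication `m_{g,h}(c′⊗c″) = Σᵢ ξ′ᵢ c′ g(ξ″ᵢ c″) c_{g,h}`. -/
def mMul (ρ : G → A ≃ₐ[K] A) (u : G → G → Aˣ) (ξ₁ ξ₂ : ι → A) (g h : G)
    (c' c'' : A) : A :=
  ∑ i, ξ₁ i * c' * ρ g (ξ₂ i * c'') * (↑(u g h) : A)

/-- The twisted comultiplication `Δ_{g,h}(c) = Σᵢ c c_{g,h}⁻¹ g(ξ′ᵢ) ⊗ ξ″ᵢ`. -/
def ΔCom (ρ : G → A ≃ₐ[K] A) (u : G → G → Aˣ) (ξ₁ ξ₂ : ι → A) (g h : G)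
    (c : A) : A ⊗[K] A :=
  ∑ i, (c * (↑((u g h)⁻¹) : A) * ρ g (ξ₁ i)) ⊗ₜ[K] ξ₂ i

/-- The subspace `𝒞_g ⊗ 𝒞` of `𝒞 ⊗ 𝒞`. -/
def leftTensor (ρ : G → A ≃ₐ[K] A) (g : G) : Submodule K (A ⊗[K] A) :=
  Submodule.span K {z | ∃ x ∈ commSub ρ g, ∃ y : A, z = x ⊗ₜ[K] y}

/-- The subspace `𝒞 ⊗ 𝒞_h` of `𝒞 ⊗ 𝒞`. -/
def rightTensor (ρ : G → A ≃ₐ[K] A) (h : G) : Submodule K (A ⊗[K] A) :=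
  Submodule.span K {z | ∃ x : A, ∃ y ∈ commSub ρ h, z = x ⊗ₜ[K] y}

lemma sum_swap_helper (L₁ L₂ : A →ₗ[K] A) (n m : ι → A) (c : ι → ι → K) :
    ∑ i, L₁ (∑ j, c i j • n j) * L₂ (m i) = ∑ j, L₁ (n j) * L₂ (∑ i, c i j • m i) := by
  simp only [map_sum, map_smul, Finset.sum_mul, Finset.mul_sum, smul_mul_assoc, mul_smul_comm]
  exact Finset.sum_comm

lemma xi_swap (θ : A →ₗ[K] K) (ξ₁ ξ₂ : ι → A)
    (hξ : ∀ a : A, a = ∑ i, θ (a * ξ₂ i) • ξ₁ i)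
    (hξsym : (∑ i, ξ₁ i ⊗ₜ[K] ξ₂ i) = ∑ i, ξ₂ i ⊗ₜ[K] ξ₁ i)
    (a : A) : a = ∑ i, θ (a * ξ₁ i) • ξ₂ i := by
  have := congrArg (TensorProduct.lift ((LinearMap.lsmul K A).comp (θ.comp (LinearMap.mulLeft K a)))) hξsym
  simp only [map_sum, TensorProduct.lift.tmul, LinearMap.comp_apply, LinearMap.mulLeft_apply,
    LinearMap.lsmul_apply] at this
  rw [this]; exact hξ a

section slides
variable (θ : A →ₗ[K] K) (ξ₁ ξ₂ : ι → A)
  (htr : ∀ a b : A, θ (a * b) = θ (b * a))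
  (hξ : ∀ a : A, a = ∑ i, θ (a * ξ₂ i) • ξ₁ i)
  (hξ' : ∀ a : A, a = ∑ i, θ (a * ξ₁ i) • ξ₂ i)

include θ htr hξ hξ' in
lemma slide₁ (L₁ L₂ : A →ₗ[K] A) (a : A) :
    ∑ i, L₁ (ξ₁ i * a) * L₂ (ξ₂ i) = ∑ i, L₁ (ξ₁ i) * L₂ (a * ξ₂ i) := by
  calc ∑ i, L₁ (ξ₁ i * a) * L₂ (ξ₂ i)
      = ∑ i, L₁ (∑ j, θ (ξ₁ i * a * ξ₂ j) • ξ₁ j) * L₂ (ξ₂ i) := by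
        refine Finset.sum_congr rfl fun i _ => ?_
        rw [← hξ (ξ₁ i * a)]
    _ = ∑ j, L₁ (ξ₁ j) * L₂ (∑ i, θ (ξ₁ i * a * ξ₂ j) • ξ₂ i) :=
        sum_swap_helper L₁ L₂ ξ₁ ξ₂ _
    _ = ∑ j, L₁ (ξ₁ j) * L₂ (a * ξ₂ j) := by
        refine Finset.sum_congr rfl fun j _ => ?_
        congr 1
        have : ∀ i, θ (ξ₁ i * a * ξ₂ j) = θ ((a * ξ₂ j) * ξ₁ i) := fun i => by
          rw [mul_assoc] at *; exact htr _ _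
        simp only [this]
        exact congrArg _ (hξ' (a * ξ₂ j)).symm

include θ htr hξ hξ' in
lemma slide₂ (L₁ L₂ : A →ₗ[K] A) (a : A) :
    ∑ i, L₁ (a * ξ₁ i) * L₂ (ξ₂ i) = ∑ i, L₁ (ξ₁ i) * L₂ (ξ₂ i * a) := by
  calc ∑ i, L₁ (a * ξ₁ i) * L₂ (ξ₂ i)
      = ∑ i, L₁ (∑ j, θ (a * ξ₁ i * ξ₂ j) • ξ₁ j) * L₂ (ξ₂ i) := by
        refine Finset.sum_congr rfl fun i _ => ?_
        rw [← hξ (a * ξ₁ i)]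
    _ = ∑ j, L₁ (ξ₁ j) * L₂ (∑ i, θ (a * ξ₁ i * ξ₂ j) • ξ₂ i) :=
        sum_swap_helper L₁ L₂ ξ₁ ξ₂ _
    _ = ∑ j, L₁ (ξ₁ j) * L₂ (ξ₂ j * a) := by
        refine Finset.sum_congr rfl fun j _ => ?_
        congr 1
        have : ∀ i, θ (a * ξ₁ i * ξ₂ j) = θ ((ξ₂ j * a) * ξ₁ i) := fun i => by
          rw [htr, ← mul_assoc]
        simp only [this]
        exact congrArg _ (hξ' (ξ₂ j * a)).symm

include θ htr hξ hξ' in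
lemma inv_lemma (φ : A ≃ₐ[K] A) (hφ : ∀ x : A, θ (φ x) = θ x) (L₁ L₂ : A →ₗ[K] A) :
    ∑ i, L₁ (φ (ξ₁ i)) * L₂ (φ (ξ₂ i)) = ∑ i, L₁ (ξ₁ i) * L₂ (ξ₂ i) := by
  calc ∑ i, L₁ (φ (ξ₁ i)) * L₂ (φ (ξ₂ i))
      = ∑ i, L₁ (∑ j, θ (φ (ξ₁ i) * ξ₂ j) • ξ₁ j) * L₂ (φ (ξ₂ i)) := by
        refine Finset.sum_congr rfl fun i _ => ?_
        rw [← hξ (φ (ξ₁ i))]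
    _ = ∑ j, L₁ (ξ₁ j) * L₂ (∑ i, θ (φ (ξ₁ i) * ξ₂ j) • φ (ξ₂ i)) :=
        sum_swap_helper L₁ L₂ ξ₁ _ _
    _ = ∑ j, L₁ (ξ₁ j) * L₂ (ξ₂ j) := by
        refine Finset.sum_congr rfl fun j _ => ?_
        congr 1
        have key : ∀ i, θ (φ (ξ₁ i) * ξ₂ j) = θ (φ.symm (ξ₂ j) * ξ₁ i) := fun i => by
          rw [htr]
          conv_lhs => rw [← φ.apply_symm_apply (ξ₂ j)]
          rw [← map_mul, hφ]
        refine congrArg _ ?_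
        calc ∑ i, θ (φ (ξ₁ i) * ξ₂ j) • φ (ξ₂ i)
            = ∑ i, θ (φ.symm (ξ₂ j) * ξ₁ i) • φ (ξ₂ i) :=
              Finset.sum_congr rfl fun i _ => by rw [key i]
          _ = φ (∑ i, θ (φ.symm (ξ₂ j) * ξ₁ i) • ξ₂ i) := by
              rw [map_sum]; simp only [map_smul]
          _ = φ (φ.symm (ξ₂ j)) := by rw [← hξ' (φ.symm (ξ₂ j))]
          _ = ξ₂ j := φ.apply_symm_apply _
end slides

theorem Tmap_algebra_automorphism
    [Fintype G] (ρ : G → A ≃ₐ[K] A) (u : G → G → Aˣ) (ue : Aˣ)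
    (hAd : ∀ (g h : G) (x : A),
      ρ g (ρ h x) = (↑(u g h) : A) * ρ (g * h) x * (↑((u g h)⁻¹) : A))
    (hAde : ∀ x : A, ρ (1 : G) x = (↑ue : A) * x * (↑(ue⁻¹) : A))
    (hcoc : ∀ g h k : G,
      (↑(u g h) : A) * (↑(u (g * h) k) : A) = ρ g (↑(u h k) : A) * (↑(u g (h * k)) : A))
    (hue1 : ∀ g : G, (↑(u g 1) : A) = ρ g (↑ue : A))
    (hue2 : ∀ g : G, (↑(u 1 g) : A) = (↑ue : A))
    [FiniteDimensional K A] (θ : A →ₗ[K] K)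
    (htr : ∀ a b : A, θ (a * b) = θ (b * a))
    (hnd : ∀ a : A, (∀ b : A, θ (a * b) = 0) → a = 0)
    (hGinv : ∀ (g : G) (a : A), θ (ρ g a) = θ a)
    (ξ₁ ξ₂ : ι → A)
    (hξ : ∀ a : A, a = ∑ i, θ (a * ξ₂ i) • ξ₁ i)
    (hξsym : (∑ i, ξ₁ i ⊗ₜ[K] ξ₂ i) = ∑ i, ξ₂ i ⊗ₜ[K] ξ₁ i)
    (g h k : G) (c' c'' : A) :
    mMul ρ u ξ₁ ξ₂ (g * h * g⁻¹) (g * k * g⁻¹) (Tmap ρ u ue g h c') (Tmap ρ u ue g k c'') =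
      Tmap ρ u ue g (h * k) (mMul ρ u ξ₁ ξ₂ h k c' c'') := by
  have hξ' : ∀ a : A, a = ∑ i, θ (a * ξ₁ i) • ξ₂ i := xi_swap θ ξ₁ ξ₂ hξ hξsym
  have mulA : ∀ x y z : A, x * y * z = x * (y * z) := fun x y z => mul_assoc x y z
  set Φ : G → Aˣ →* Aˣ := fun x => Units.map (ρ x : A →* A) with hΦdef
  have hΦval : ∀ (x : G) (z : Aˣ), ((Φ x z : Aˣ) : A) = ρ x (z : A) := by
    intro x z; simp [hΦdef]
  have hcocU : ∀ x y z : G, u x y * u (x * y) z = Φ x (u y z) * u x (y * z) := by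
    intro x y z
    refine Units.ext ?_
    simp only [Units.val_mul, hΦval]
    exact hcoc x y z
  have hue1U : ∀ x : G, u x 1 = Φ x ue := fun x => Units.ext (by rw [hΦval]; exact hue1 x)
  have hue2U : ∀ x : G, u 1 x = ue := fun x => Units.ext (hue2 x)
  set wU : Aˣ := (u g⁻¹ g * ue)⁻¹ with hwUdef
  have keyA : Φ g wU = (u g g⁻¹ * ue)⁻¹ := by
    have h1 := hcocU g g⁻¹ g
    rw [mul_inv_cancel, inv_mul_cancel, hue2U, hue1U] at h1
    rw [hwUdef, map_inv, map_mul, ← h1]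
  have hEV : (↑(ue⁻¹) : A) * ↑((u g g⁻¹)⁻¹) = ρ g ↑wU := by
    rw [← hΦval g wU, keyA, mul_inv_rev, Units.val_mul]
  have hEVr : ∀ r : A, (↑(ue⁻¹) : A) * (↑((u g g⁻¹)⁻¹) * r) = ρ g ↑wU * r := fun r => by
    rw [← mulA, hEV]
  have hEVa : ∀ r : A, ρ (g*h*g⁻¹) ((↑(ue⁻¹) : A)) * (ρ (g*h*g⁻¹) ((↑((u g g⁻¹)⁻¹) : A)) * r) =
      ρ (g*h*g⁻¹) (ρ g ↑wU) * r := fun r => by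
    rw [← mulA, ← map_mul, hEV]
  have hAdghr : ∀ (x r : A), ρ g (ρ h x) * r = ↑(u g h) * (ρ (g*h) x * ((↑((u g h)⁻¹) : A) * r)) := fun x r => by
    rw [hAd g h x]; simp only [mulA]
  have hAdP' : ∀ (x r : A), ρ (g*h*g⁻¹) (ρ g x) * r =
      ↑(u (g*h*g⁻¹) g) * (ρ (g*h) x * ((↑((u (g*h*g⁻¹) g)⁻¹) : A) * r)) := fun x r => by
    have h5 := hAd (g*h*g⁻¹) g x
    rw [show g*h*g⁻¹*g = g*h by group] at h5
    rw [h5]; simp only [mulA]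
  have hcocgr : ∀ r : A, ρ g ((↑(u h k) : A)) * ((↑(u g (h*k)) : A) * r) =
      ↑(u g h) * ((↑(u (g*h) k) : A) * r) := fun r => by
    rw [← mulA, ← hcoc g h k]; simp only [mulA]
  have keyBU : u (g*h) g⁻¹ * (u (g*h*g⁻¹) g * Φ (g*h) wU) = 1 := by
    have h2 := hcocU (g*h) g⁻¹ g
    rw [inv_mul_cancel, hue1U] at h2
    rw [← mul_assoc, h2, ← map_mul, ← map_mul, hwUdef, mul_inv_cancel, map_one]
  have keyBr : ∀ r : A, (↑(u (g*h) g⁻¹) : A) * ((↑(u (g*h*g⁻¹) g) : A) * (ρ (g*h) ↑wU * r)) = r := by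
    have h6 : (↑(u (g*h) g⁻¹) : A) * ((↑(u (g*h*g⁻¹) g) : A) * ρ (g*h) ↑wU) = 1 := by
      have h7 := congrArg Units.val keyBU
      simpa [Units.val_mul, hΦval] using h7
    intro r
    rw [show (↑(u (g*h) g⁻¹) : A) * ((↑(u (g*h*g⁻¹) g) : A) * (ρ (g*h) (↑wU : A) * r)) =
        ((↑(u (g*h) g⁻¹) : A) * ((↑(u (g*h*g⁻¹) g) : A) * ρ (g*h) (↑wU : A))) * r by
      simp only [mulA], h6, one_mul]
  have keyCU : Φ (g*h*g⁻¹) (u g k * u (g*k) g⁻¹) * u (g*h*g⁻¹) (g*k*g⁻¹) =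
      u (g*h*g⁻¹) g * u (g*h) k * u (g*h*k) g⁻¹ := by
    have c1 := hcocU (g*h*g⁻¹) g k
    rw [show g*h*g⁻¹*g = g*h by group] at c1
    have c2 := hcocU (g*h*g⁻¹) (g*k) g⁻¹
    rw [show g*h*g⁻¹*(g*k) = g*h*k by group] at c2
    calc Φ (g*h*g⁻¹) (u g k * u (g*k) g⁻¹) * u (g*h*g⁻¹) (g*k*g⁻¹)
        = Φ (g*h*g⁻¹) (u g k) * (Φ (g*h*g⁻¹) (u (g*k) g⁻¹) * u (g*h*g⁻¹) (g*k*g⁻¹)) := by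
          rw [map_mul, mul_assoc]
      _ = Φ (g*h*g⁻¹) (u g k) * (u (g*h*g⁻¹) (g*k) * u (g*h*k) g⁻¹) := by rw [← c2]
      _ = (Φ (g*h*g⁻¹) (u g k) * u (g*h*g⁻¹) (g*k)) * u (g*h*k) g⁻¹ :=
          (mul_assoc (Φ (g*h*g⁻¹) (u g k)) (u (g*h*g⁻¹) (g*k)) (u (g*h*k) g⁻¹)).symm
      _ = u (g*h*g⁻¹) g * u (g*h) k * u (g*h*k) g⁻¹ := by rw [← c1]
  have keyCr : ρ (g*h*g⁻¹) ((↑(u g k) : A)) * (ρ (g*h*g⁻¹) ((↑(u (g*k) g⁻¹) : A)) * ↑(u (g*h*g⁻¹) (g*k*g⁻¹))) =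
      ↑(u (g*h*g⁻¹) g) * ((↑(u (g*h) k) : A) * ↑(u (g*h*k) g⁻¹)) := by
    have h8 := congrArg Units.val keyCU
    simpa [Units.val_mul, hΦval, map_mul, mulA] using h8
  have hL : mMul ρ u ξ₁ ξ₂ (g * h * g⁻¹) (g * k * g⁻¹) (Tmap ρ u ue g h c') (Tmap ρ u ue g k c'') =
      ∑ i, ρ g (ξ₁ i) * (ρ g c' * ((↑(u g h) : A) * (ρ (g*h) (ξ₂ i) * (ρ (g*h) (↑wU : A) * (ρ (g*h) c'' * ((↑(u (g*h) k) : A) * ↑(u (g*h*k) g⁻¹))))))) := by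
    have inst1 := (inv_lemma θ ξ₁ ξ₂ htr hξ hξ' (ρ g) (hGinv g)
      (LinearMap.mulRight K ((↑(ue⁻¹) : A) * ↑((u g g⁻¹)⁻¹) * ρ g c' * ↑(u g h) * ↑(u (g*h) g⁻¹)))
      (LinearMap.mulRight K (ρ (g*h*g⁻¹) ((↑(ue⁻¹) : A) * ↑((u g g⁻¹)⁻¹) * ρ g c'' * ↑(u g k) * ↑(u (g*k) g⁻¹)) * ↑(u (g*h*g⁻¹) (g*k*g⁻¹))) ∘ₗ (ρ (g*h*g⁻¹)).toLinearMap)).symm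
    have inst2 := slide₁ θ ξ₁ ξ₂ htr hξ hξ' (ρ g).toLinearMap
      (LinearMap.mulLeft K (ρ g c' * ((↑(u g h) : A) * ((↑(u (g*h) g⁻¹) : A) * ↑(u (g*h*g⁻¹) g)))) ∘ₗ (LinearMap.mulRight K ((↑((u (g*h*g⁻¹) g)⁻¹) : A) * (ρ (g*h*g⁻¹) ((↑(ue⁻¹) : A) * ↑((u g g⁻¹)⁻¹) * ρ g c'' * ↑(u g k) * ↑(u (g*k) g⁻¹)) * ↑(u (g*h*g⁻¹) (g*k*g⁻¹)))) ∘ₗ (ρ (g*h)).toLinearMap)) ((↑wU : A))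
    simp only [LinearMap.mulRight_apply, LinearMap.mulLeft_apply, LinearMap.coe_comp,
      Function.comp_apply, AlgEquiv.toLinearMap_apply] at inst1 inst2
    calc mMul ρ u ξ₁ ξ₂ (g * h * g⁻¹) (g * k * g⁻¹) (Tmap ρ u ue g h c') (Tmap ρ u ue g k c'')
        = ∑ i, (ξ₁ i * ((↑(ue⁻¹) : A) * ↑((u g g⁻¹)⁻¹) * ρ g c' * ↑(u g h) * ↑(u (g*h) g⁻¹))) * (ρ (g*h*g⁻¹) (ξ₂ i) * (ρ (g*h*g⁻¹) ((↑(ue⁻¹) : A) * ↑((u g g⁻¹)⁻¹) * ρ g c'' * ↑(u g k) * ↑(u (g*k) g⁻¹)) * ↑(u (g*h*g⁻¹) (g*k*g⁻¹)))) := by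
          simp only [mMul, Tmap, mulA, map_mul, map_sum, Finset.sum_mul, Finset.mul_sum, hEVr, hEVa, hAdghr, hAdP', hcocgr, keyBr, keyCr, Units.inv_mul_cancel_left, Units.mul_inv_cancel_left, show g*(h*k) = g*h*k from (mul_assoc g h k).symm]
      _ = ∑ i, (ρ g (ξ₁ i) * ((↑(ue⁻¹) : A) * ↑((u g g⁻¹)⁻¹) * ρ g c' * ↑(u g h) * ↑(u (g*h) g⁻¹))) * (ρ (g*h*g⁻¹) (ρ g (ξ₂ i)) * (ρ (g*h*g⁻¹) ((↑(ue⁻¹) : A) * ↑((u g g⁻¹)⁻¹) * ρ g c'' * ↑(u g k) * ↑(u (g*k) g⁻¹)) * ↑(u (g*h*g⁻¹) (g*k*g⁻¹)))) := inst1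
      _ = ∑ i, ρ g (ξ₁ i * (↑wU : A)) * ((ρ g c' * ((↑(u g h) : A) * ((↑(u (g*h) g⁻¹) : A) * ↑(u (g*h*g⁻¹) g)))) * (ρ (g*h) (ξ₂ i) * ((↑((u (g*h*g⁻¹) g)⁻¹) : A) * (ρ (g*h*g⁻¹) ((↑(ue⁻¹) : A) * ↑((u g g⁻¹)⁻¹) * ρ g c'' * ↑(u g k) * ↑(u (g*k) g⁻¹)) * ↑(u (g*h*g⁻¹) (g*k*g⁻¹)))))) := by
          simp only [mMul, Tmap, mulA, map_mul, map_sum, Finset.sum_mul, Finset.mul_sum, hEVr, hEVa, hAdghr, hAdP', hcocgr, keyBr, keyCr, Units.inv_mul_cancel_left, Units.mul_inv_cancel_left, show g*(h*k) = g*h*k from (mul_assoc g h k).symm]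
      _ = ∑ i, ρ g (ξ₁ i) * ((ρ g c' * ((↑(u g h) : A) * ((↑(u (g*h) g⁻¹) : A) * ↑(u (g*h*g⁻¹) g)))) * (ρ (g*h) ((↑wU : A) * ξ₂ i) * ((↑((u (g*h*g⁻¹) g)⁻¹) : A) * (ρ (g*h*g⁻¹) ((↑(ue⁻¹) : A) * ↑((u g g⁻¹)⁻¹) * ρ g c'' * ↑(u g k) * ↑(u (g*k) g⁻¹)) * ↑(u (g*h*g⁻¹) (g*k*g⁻¹)))))) := inst2
      _ = ∑ i, ρ g (ξ₁ i) * (ρ g c' * ((↑(u g h) : A) * (ρ (g*h) (ξ₂ i) * (ρ (g*h) (↑wU : A) * (ρ (g*h) c'' * ((↑(u (g*h) k) : A) * ↑(u (g*h*k) g⁻¹))))))) := by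
          simp only [mMul, Tmap, mulA, map_mul, map_sum, Finset.sum_mul, Finset.mul_sum, hEVr, hEVa, hAdghr, hAdP', hcocgr, keyBr, keyCr, Units.inv_mul_cancel_left, Units.mul_inv_cancel_left, show g*(h*k) = g*h*k from (mul_assoc g h k).symm]
  have hR : Tmap ρ u ue g (h * k) (mMul ρ u ξ₁ ξ₂ h k c' c'') =
      ∑ i, ρ g (ξ₁ i) * (ρ g c' * ((↑(u g h) : A) * (ρ (g*h) (ξ₂ i) * (ρ (g*h) (↑wU : A) * (ρ (g*h) c'' * ((↑(u (g*h) k) : A) * ↑(u (g*h*k) g⁻¹))))))) := by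
    have inst3 := slide₂ θ ξ₁ ξ₂ htr hξ hξ' (ρ g).toLinearMap
      (LinearMap.mulLeft K (ρ g c') ∘ₗ (LinearMap.mulLeft K ((↑(u g h) : A)) ∘ₗ
        (LinearMap.mulRight K (ρ (g*h) c'' * ((↑(u (g*h) k) : A) * ↑(u (g*h*k) g⁻¹))) ∘ₗ (ρ (g*h)).toLinearMap))) ((↑wU : A))
    simp only [LinearMap.mulRight_apply, LinearMap.mulLeft_apply, LinearMap.coe_comp,
      Function.comp_apply, AlgEquiv.toLinearMap_apply] at inst3
    calc Tmap ρ u ue g (h * k) (mMul ρ u ξ₁ ξ₂ h k c' c'')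
        = ∑ i, ρ g ((↑wU : A) * ξ₁ i) * (ρ g c' * ((↑(u g h) : A) * (ρ (g*h) (ξ₂ i) * (ρ (g*h) c'' * ((↑(u (g*h) k) : A) * ↑(u (g*h*k) g⁻¹)))))) := by
          simp only [mMul, Tmap, mulA, map_mul, map_sum, Finset.sum_mul, Finset.mul_sum, hEVr, hEVa, hAdghr, hAdP', hcocgr, keyBr, keyCr, Units.inv_mul_cancel_left, Units.mul_inv_cancel_left, show g*(h*k) = g*h*k from (mul_assoc g h k).symm]
      _ = ∑ i, ρ g (ξ₁ i) * (ρ g c' * ((↑(u g h) : A) * (ρ (g*h) (ξ₂ i * (↑wU : A)) * (ρ (g*h) c'' * ((↑(u (g*h) k) : A) * ↑(u (g*h*k) g⁻¹)))))) := inst3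
      _ = ∑ i, ρ g (ξ₁ i) * (ρ g c' * ((↑(u g h) : A) * (ρ (g*h) (ξ₂ i) * (ρ (g*h) (↑wU : A) * (ρ (g*h) c'' * ((↑(u (g*h) k) : A) * ↑(u (g*h*k) g⁻¹))))))) := by
          simp only [mMul, Tmap, mulA, map_mul, map_sum, Finset.sum_mul, Finset.mul_sum, hEVr, hEVa, hAdghr, hAdP', hcocgr, keyBr, keyCr, Units.inv_mul_cancel_left, Units.mul_inv_cancel_left, show g*(h*k) = g*h*k from (mul_assoc g h k).symm]
  rw [hL, hR]
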